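/- Let Φ = (V, 𝒬, 𝒞) be a CSP formula with threshold p' ∈ (0,1) and a fixed ordering v_1, …, v_n of V, and let X be a partial assignment with u := var(X) ≠ ⊥. Then for every a ∈ Q_u ∪ {⋆}, setting Y := X_{u←a}, one has C_rec(X) ⊆ C_rec(Y), C_fix(X) ⊆ C_fix(Y), C_frozen(X) ⊆ C_frozen(Y), C_⋆(X) ⊆ C_⋆(Y), C_⋆frozen(X) ⊆ C_⋆frozen(Y), and C_bad(X) ⊆ C_bad(Y). -/

import Mathlib

open Finset

inductive PVal (α : Type) : Type where
  | val (a : α)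
  | star
  | unacc

structure CSP (V : Type) [Fintype V] [DecidableEq V] where
  Q : V → Type
  fintypeQ : ∀ v, Fintype (Q v)
  decEqQ : ∀ v, DecidableEq (Q v)
  card_two : ∀ v, 2 ≤ Fintype.card (Q v)
  C : Type
  fintypeC : Fintype C
  decEqC : DecidableEq C
  vbl : C → Finset V
  sat : C → ((v : V) → Q v) → Prop
  sat_local : ∀ c x y, (∀ v ∈ vbl c, x v = y v) → sat c x → sat c y

attribute [instance] CSP.fintypeQ CSP.decEqQ CSP.fintypeC CSP.decEqC

namespace CSP

variable {V : Type} [Fintype V] [DecidableEq V] (Φ : CSP V)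

/-- The space of (full) assignments `𝒬 = ∏_v Q_v`. -/
abbrev Assign := (v : V) → Φ.Q v

/-- Partial assignments `𝒬* = ∏_v (Q_v ∪ {⋆, ☆})`. -/
abbrev PAssign := (v : V) → PVal (Φ.Q v)

/-- A full assignment agrees with a partial assignment on all assigned variables. -/
def agrees (σ : Φ.PAssign) (x : Φ.Assign) : Prop :=
  ∀ (v : V) (a : Φ.Q v), σ v = PVal.val a → x v = a

/-- `v ∈ Λ(σ)` : the variable `v` is assigned a value from its domain in `σ`. -/
def assigned (σ : Φ.PAssign) (v : V) : Prop := ∃ a, σ v = PVal.val a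

/-- The set of satisfying assignments. -/
def Sat : Set Φ.Assign := {x | ∀ c, Φ.sat c x}

/-- The event `¬ c` that constraint `c` is violated. -/
def viol (c : Φ.C) : Set Φ.Assign := {x | ¬ Φ.sat c x}

/-- `ℙ[A]` : probability of the event `A` under the uniform product distribution. -/
noncomputable def prob (A : Set Φ.Assign) : ℝ :=
  (A.ncard : ℝ) / (Fintype.card Φ.Assign : ℝ)

/-- `ℙ[A | σ]` : probability of `A` under the uniform product distribution conditioned
on agreeing with `σ` on all assigned variables. -/
noncomputable def condProb (A : Set Φ.Assign) (σ : Φ.PAssign) : ℝ :=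
  ((A ∩ {x | Φ.agrees σ x}).ncard : ℝ) / (({x : Φ.Assign | Φ.agrees σ x}).ncard : ℝ)

/-- `Pr_μ[A]` : probability of `A` under the uniform distribution over satisfying assignments. -/
noncomputable def muProb (A : Set Φ.Assign) : ℝ :=
  ((A ∩ Φ.Sat).ncard : ℝ) / ((Φ.Sat.ncard : ℝ))

/-- the domain size `q`. -/
noncomputable def qmax : ℕ := Finset.univ.sup fun v : V => Fintype.card (Φ.Q v)

/-- the width `k`. -/
noncomputable def width : ℕ := Finset.univ.sup fun c : Φ.C => (Φ.vbl c).card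

/-- the dependency degree `Δ`. -/
noncomputable def degree : ℕ :=
  Finset.univ.sup fun c : Φ.C =>
    (Finset.univ.filter fun c' : Φ.C => c' ≠ c ∧ ((Φ.vbl c) ∩ (Φ.vbl c')).Nonempty).card

end CSP

namespace CSP

variable {V : Type} [Fintype V] [DecidableEq V] (Φ : CSP V) (p' : ℝ)

/-- `C_frozen(σ)` : the set of `σ`-frozen constraints, i.e. those with
`ℙ[¬c | σ] > p'`. -/
def Cfrozen (σ : Φ.PAssign) : Set Φ.C := {c | p' < Φ.condProb (Φ.viol c) σ}

/-- `V_fix(σ) = Λ⁺(σ) ∪ ⋃_{c ∈ C_frozen(σ)} vbl(c)` : the set of `σ`-fixed variables. -/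
def Vfix (σ : Φ.PAssign) : Set V :=
  {v | σ v ≠ PVal.unacc} ∪ ⋃ c ∈ Φ.Cfrozen p' σ, (Φ.vbl c : Set V)

/-- `C_fix(σ)` : constraints not yet satisfied by `σ` all of whose variables are
`σ`-fixed. -/
def Cfix (σ : Φ.PAssign) : Set Φ.C :=
  {c | (Φ.vbl c : Set V) ⊆ Φ.Vfix p' σ ∧ 0 < Φ.condProb (Φ.viol c) σ}

/-- A chain of constraints `cs 0, …, cs n` witnessing `⋆`-influence: it starts at a
constraint containing a `⋆`-variable, all but possibly the last lie in `C_fix(σ)`, and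
consecutive constraints overlap on an unassigned variable. -/
def StarChain (σ : Φ.PAssign) (n : ℕ) (cs : ℕ → Φ.C) : Prop :=
  (∃ u, σ u = PVal.star ∧ u ∈ Φ.vbl (cs 0)) ∧
  (∀ j < n, cs j ∈ Φ.Cfix p' σ) ∧
  (∀ j < n, ∃ w ∈ Φ.vbl (cs j) ∩ Φ.vbl (cs (j + 1)), ¬ Φ.assigned σ w)

/-- `C_⋆(σ)` : constraints reachable by a `⋆`-influence chain. -/
def Cstar (σ : Φ.PAssign) : Set Φ.C :=
  {c | ∃ n cs, Φ.StarChain p' σ n cs ∧ cs n = c}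

/-- `V_⋆(σ)` : the set of `⋆`-influenced variables. -/
def Vstar (σ : Φ.PAssign) : Set V :=
  {w | ∃ n cs, Φ.StarChain p' σ n cs ∧ w ∈ Φ.vbl (cs n)}

/-- `∂V_⋆(σ) = V_⋆(σ) ∖ V_fix(σ)` : the candidate set for `var(σ)`;
`var(σ) = ⊥` precisely when this set is empty. -/
def varSet (σ : Φ.PAssign) : Set V := Φ.Vstar p' σ \ Φ.Vfix p' σ

/-- `var(σ) = u` : `u` is the smallest element (in the fixed ordering of the
variables) of `V_⋆(σ) ∖ V_fix(σ)`. -/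
def IsVar [LinearOrder V] (σ : Φ.PAssign) (u : V) : Prop :=
  u ∈ Φ.varSet p' σ ∧ ∀ w ∈ Φ.varSet p' σ, u ≤ w

/-- `C_rec(σ)` : constraints containing a `⋆`-variable. -/
def Crec (σ : Φ.PAssign) : Set Φ.C := {c | ∃ v ∈ Φ.vbl c, σ v = PVal.star}

/-- `C_⋆frozen(σ) = C_frozen(σ) ∩ C_⋆(σ)`. -/
def CstarFrozen (σ : Φ.PAssign) : Set Φ.C := Φ.Cfrozen p' σ ∩ Φ.Cstar p' σ

/-- `C_bad(σ) = C_rec(σ) ∪ C_⋆frozen(σ)`. -/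
def Cbad (σ : Φ.PAssign) : Set Φ.C := Φ.Crec σ ∪ Φ.CstarFrozen p' σ

/-- `𝒞^X_v` : the constraints of the connected component containing `v` of `Φ`
simplified under `X`. -/
def CompCons (X : Φ.PAssign) (v : V) : Set Φ.C :=
  {c | ∃ (t : ℕ) (cs : ℕ → Φ.C), cs t = c ∧ v ∈ Φ.vbl (cs 0) ∧
    (∀ j ≤ t, 0 < Φ.condProb (Φ.viol (cs j)) X) ∧
    (∀ j < t, ∃ w ∈ Φ.vbl (cs j) ∩ Φ.vbl (cs (j + 1)), ¬ Φ.assigned X w)}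

/-- A var-guided sequence of partial assignments: at each step `i < ℓ`, the next
partial assignment is obtained by giving the variable `var(X_i) ≠ ⊥` a value in
`Q_{var(X_i)} ∪ {⋆}`. -/
def VarGuided [LinearOrder V] (X : ℕ → Φ.PAssign) (ℓ : ℕ) : Prop :=
  ∀ i < ℓ, ∃ (u : V) (a : PVal (Φ.Q u)), a ≠ PVal.unacc ∧
    Φ.IsVar p' (X i) u ∧ X (i + 1) = Function.update (X i) u a

end CSP


namespace CSP

variable {V : Type} [Fintype V] [DecidableEq V] (Φ : CSP V)

/-- Counting: a set invariant under changing coordinate `u` has cardinality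
`|Q u|` times that of its slice `{x u = b}`. -/
lemma ncard_eq_card_mul {u : V} (S : Set Φ.Assign)
    (hS : ∀ (x : Φ.Assign) (q : Φ.Q u), x ∈ S → Function.update x u q ∈ S)
    (b : Φ.Q u) :
    S.ncard = Fintype.card (Φ.Q u) * (S ∩ {x | x u = b}).ncard := by
  have e : S ≃ Φ.Q u × ((S ∩ {x | x u = b} : Set Φ.Assign)) :=
  { toFun := fun x => ⟨x.1 u, ⟨Function.update x.1 u b,
      hS x.1 b x.2, Function.update_self _ _ _⟩⟩
    invFun := fun p => ⟨Function.update p.2.1 u p.1, hS _ _ p.2.2.1⟩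
    left_inv := fun x => by
      apply Subtype.ext
      simp only [Function.update_idem, Function.update_eq_self]
    right_inv := fun p => by
      obtain ⟨q, y, hy⟩ := p
      refine Prod.ext ?_ ?_
      · simp [Function.update_self]
      · apply Subtype.ext
        show Function.update (Function.update y u q) u b = y
        rw [Function.update_idem, ← hy.2, Function.update_eq_self] }
  have h1 : Nat.card S = Fintype.card (Φ.Q u) * Nat.card ((S ∩ {x | x u = b} : Set Φ.Assign)) := by
    rw [Nat.card_congr e, Nat.card_prod, Nat.card_eq_fintype_card]
  simpa [Nat.card_coe_set_eq] using h1

lemma agrees_update_star {σ : Φ.PAssign} {u : V} (hσ : σ u = PVal.unacc) (x : Φ.Assign) :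
    Φ.agrees (Function.update σ u PVal.star) x ↔ Φ.agrees σ x := by
  constructor
  · intro h v a hva
    apply h v a
    rcases eq_or_ne v u with rfl | hvu
    · rw [hσ] at hva; cases hva
    · rwa [Function.update_of_ne hvu]
  · intro h v a hva
    rcases eq_or_ne v u with rfl | hvu
    · rw [Function.update_self] at hva; cases hva
    · rw [Function.update_of_ne hvu] at hva; exact h v a hva

lemma agrees_update_val {σ : Φ.PAssign} {u : V} (hσ : σ u = PVal.unacc) (b : Φ.Q u)
    (x : Φ.Assign) :
    Φ.agrees (Function.update σ u (PVal.val b)) x ↔ Φ.agrees σ x ∧ x u = b := by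
  constructor
  · intro h
    refine ⟨fun v a hva => ?_, h u b (Function.update_self _ _ _)⟩
    have hvu : v ≠ u := fun e => by subst e; rw [hσ] at hva; cases hva
    exact h v a (by rwa [Function.update_of_ne hvu])
  · rintro ⟨h, hb⟩ v a hva
    rcases eq_or_ne v u with rfl | hvu
    · rw [Function.update_self] at hva
      obtain rfl : b = a := by injection hva
      exact hb
    · rw [Function.update_of_ne hvu] at hva; exact h v a hva

lemma agrees_update_x {σ : Φ.PAssign} {u : V} (hσ : σ u = PVal.unacc)
    {x : Φ.Assign} (h : Φ.agrees σ x) (q : Φ.Q u) :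
    Φ.agrees σ (Function.update x u q) := by
  intro v a hva
  have hvu : v ≠ u := fun e => by subst e; rw [hσ] at hva; cases hva
  rw [Function.update_of_ne hvu]; exact h v a hva

/-- If `σ u = ☆` and the event `A` does not depend on coordinate `u`, then updating
`σ` at `u` (to a value or `⋆`) does not change the conditional probability of `A`. -/
lemma condProb_update {σ : Φ.PAssign} {u : V} (hσ : σ u = PVal.unacc)
    {A : Set Φ.Assign}
    (hA : ∀ (x : Φ.Assign) (q : Φ.Q u), x ∈ A → Function.update x u q ∈ A)
    {a : PVal (Φ.Q u)} (ha : a ≠ PVal.unacc) :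
    Φ.condProb A (Function.update σ u a) = Φ.condProb A σ := by
  cases a with
  | unacc => exact absurd rfl ha
  | star =>
    have hset : {x : Φ.Assign | Φ.agrees (Function.update σ u PVal.star) x}
        = {x | Φ.agrees σ x} := Set.ext fun x => Φ.agrees_update_star hσ x
    unfold condProb
    rw [hset]
  | val b =>
    have hset : {x : Φ.Assign | Φ.agrees (Function.update σ u (PVal.val b)) x}
        = {x | Φ.agrees σ x} ∩ {x | x u = b} :=
      Set.ext fun x => by
        simpa [Set.mem_inter_iff] using Φ.agrees_update_val hσ b x
    unfold condProb
    rw [hset, ← Set.inter_assoc]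
    have hN := Φ.ncard_eq_card_mul (A ∩ {x | Φ.agrees σ x})
      (fun x q hx => ⟨hA x q hx.1, Φ.agrees_update_x hσ hx.2 q⟩) b
    have hD := Φ.ncard_eq_card_mul {x : Φ.Assign | Φ.agrees σ x}
      (fun x q hx => Φ.agrees_update_x hσ hx q) b
    rw [hN, hD]
    push_cast
    have hq : (Fintype.card (Φ.Q u) : ℝ) ≠ 0 := by
      have := Φ.card_two u
      positivity
    rw [mul_div_mul_left _ _ hq]

end CSP

/-- **Monotonicity under extending at `var(X)`.**
If `u = var(X) ≠ ⊥` and `Y = X_{u←a}` for some `a ∈ Q_u ∪ {⋆}`, then each of the sets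
`C_rec`, `C_fix`, `C_frozen`, `C_⋆`, `C_⋆frozen` and `C_bad` of `X` is contained in the
corresponding set of `Y`. -/
theorem statement10 {V : Type} [LinearOrder V] [Fintype V] (Φ : CSP V)
    (p' : ℝ) (hp' : p' ∈ Set.Ioo (0 : ℝ) 1)
    (X : Φ.PAssign) (u : V) (hu : Φ.IsVar p' X u)
    (a : PVal (Φ.Q u)) (ha : a ≠ PVal.unacc) :
    Φ.Crec X ⊆ Φ.Crec (Function.update X u a) ∧
    Φ.Cfix p' X ⊆ Φ.Cfix p' (Function.update X u a) ∧
    Φ.Cfrozen p' X ⊆ Φ.Cfrozen p' (Function.update X u a) ∧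
    Φ.Cstar p' X ⊆ Φ.Cstar p' (Function.update X u a) ∧
    Φ.CstarFrozen p' X ⊆ Φ.CstarFrozen p' (Function.update X u a) ∧
    Φ.Cbad p' X ⊆ Φ.Cbad p' (Function.update X u a) := by
  have huVf : u ∉ Φ.Vfix p' X := hu.1.2
  have hXu : X u = PVal.unacc := by
    by_contra h
    exact huVf (Or.inl h)
  have hfroz_u : ∀ c ∈ Φ.Cfrozen p' X, u ∉ Φ.vbl c := fun c hc hcu =>
    huVf (Or.inr (Set.mem_biUnion hc (Finset.mem_coe.mpr hcu)))
  have hviol : ∀ c, u ∉ Φ.vbl c → ∀ (x : Φ.Assign) (q : Φ.Q u),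
      x ∈ Φ.viol c → Function.update x u q ∈ Φ.viol c := by
    intro c hc x q hx hsat
    exact hx (Φ.sat_local c _ x
      (fun v hv => Function.update_of_ne (fun e => hc (by rw [← e]; exact hv)) _ _) hsat)
  have hcp : ∀ c, u ∉ Φ.vbl c →
      Φ.condProb (Φ.viol c) (Function.update X u a) = Φ.condProb (Φ.viol c) X :=
    fun c hc => Φ.condProb_update hXu (hviol c hc) ha
  have hfroz : Φ.Cfrozen p' X ⊆ Φ.Cfrozen p' (Function.update X u a) := by
    intro c hc
    show p' < Φ.condProb (Φ.viol c) (Function.update X u a)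
    rw [hcp c (hfroz_u c hc)]
    exact hc
  have hVfix : Φ.Vfix p' X ⊆ Φ.Vfix p' (Function.update X u a) := by
    intro v hv
    rcases hv with hv | hv
    · left
      rcases eq_or_ne v u with rfl | hvu
      · show Function.update X v a v ≠ PVal.unacc
        rwa [Function.update_self]
      · show Function.update X u a v ≠ PVal.unacc
        rwa [Function.update_of_ne hvu]
    · right
      simp only [Set.mem_iUnion] at hv ⊢
      obtain ⟨c, hc, hvc⟩ := hv
      exact ⟨c, hfroz hc, hvc⟩
  have hu_notin : ∀ c ∈ Φ.Cfix p' X, u ∉ Φ.vbl c := fun c hc hcu =>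
    huVf (hc.1 (Finset.mem_coe.mpr hcu))
  have hCfix : Φ.Cfix p' X ⊆ Φ.Cfix p' (Function.update X u a) := fun c hc =>
    ⟨fun v hv => hVfix (hc.1 hv), by rw [hcp c (hu_notin c hc)]; exact hc.2⟩
  have hCrec : Φ.Crec X ⊆ Φ.Crec (Function.update X u a) := by
    rintro c ⟨v, hv, hvs⟩
    have hvu : v ≠ u := fun e => by rw [e, hXu] at hvs; cases hvs
    exact ⟨v, hv, by rwa [Function.update_of_ne hvu]⟩
  have hCstar : Φ.Cstar p' X ⊆ Φ.Cstar p' (Function.update X u a) := by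
    rintro c ⟨n, cs, ⟨⟨u0, hu0s, hu0v⟩, hfix, hchain⟩, rfl⟩
    refine ⟨n, cs, ⟨⟨u0, ?_, hu0v⟩, fun j hj => hCfix (hfix j hj), fun j hj => ?_⟩, rfl⟩
    · have hne : u0 ≠ u := fun e => by rw [e, hXu] at hu0s; cases hu0s
      rwa [Function.update_of_ne hne]
    · obtain ⟨w, hw, hwn⟩ := hchain j hj
      refine ⟨w, hw, ?_⟩
      have hwu : w ≠ u := by
        intro e
        exact hu_notin (cs j) (hfix j hj) (e ▸ (Finset.mem_inter.mp hw).1)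
      rintro ⟨b, hb⟩
      rw [Function.update_of_ne hwu] at hb
      exact hwn ⟨b, hb⟩
  exact ⟨hCrec, hCfix, hfroz, hCstar, fun c hc => ⟨hfroz hc.1, hCstar hc.2⟩,
    fun c hc => hc.elim (fun h => Or.inl (hCrec h))
      (fun h => Or.inr ⟨hfroz h.1, hCstar h.2⟩)⟩
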